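/- Assume that for each j = 1,…,N: (a) (D_j R_j A V, W^j) = (D_j B_j R_j V, W^j) for all V ∈ ℂ^n and all W^j ∈ ℂ^{n_j}; (b) there exists Λ₀ > 0 such that ‖Σ_{j=1}^N R_jᵀ W^j‖_Ω² ≤ Λ₀ Σ_{j=1}^N ‖W^j‖_{Ω_j}² for all choices of W^j ∈ ℂ^{n_j}; (c) there exists Λ₁ > 0 such that Σ_{j=1}^N ‖R_j V‖_{Ω_j}² ≤ Λ₁ ‖V‖_Ω² for all V ∈ ℂ^n; (d) there exists C_{D,j} > 0 with ‖D_j W^j‖_{Ω_j} ≤ C_{D,j} ‖W^j‖_{Ω_j} for all W^j ∈ ℂ^{n_j}; (e) there exists C_{DB,j} > 0 with |([D_j, B_j] V^j, W^j)| ≤ C_{DB,j} ‖V^j‖_{Ω_j} ‖W^j‖_{Ω_j} for all V^j, W^j ∈ ℂ^{n_j}; (f) there exists C_{stab,j} > 0 such that ‖U^j‖_{Ω_j} ≤ C_{stab,j} · max_{W^j ∈ ℂ^{n_j}, W^j ≠ 0} |(B_j U^j, W^j)| / ‖W^j‖_{Ω_j} for all U^j ∈ ℂ^{n_j}. Then for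 every nonzero V ∈ ℂ^n, ‖M⁻¹ A V‖_Ω / ‖V‖_Ω ≤ √(Λ₀ Λ₁) · max_{j=1,…,N} { C_{D,j} (C_{stab,j} C_{DB,j} + C_{D,j}) }. -/

import Mathlib

open Matrix
open scoped ComplexOrder

/-- Hermitian inner product `(V, W) = W* V`. -/
noncomputable def iprod {m : ℕ} (V W : Fin m → ℂ) : ℂ := star W ⬝ᵥ V

/-- Weighted norm `‖V‖_F = ((F V, V))^{1/2}` for a Hermitian positive definite `F`. -/
noncomputable def wnorm {m : ℕ} (F : Matrix (Fin m) (Fin m) ℂ) (V : Fin m → ℂ) : ℝ :=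
  Real.sqrt (iprod (F.mulVec V) V).re

lemma wnorm_eq_norm {m : ℕ} {F : Matrix (Fin m) (Fin m) ℂ} (hF : F.PosDef) (x : Fin m → ℂ) :
    wnorm F x = @norm _ (Matrix.toNormedAddCommGroup F hF).toNorm x := by
  unfold wnorm iprod; rw [dotProduct_comm]; rfl

lemma wnorm_nonneg {m : ℕ} (F : Matrix (Fin m) (Fin m) ℂ) (x : Fin m → ℂ) :
    0 ≤ wnorm F x := Real.sqrt_nonneg _

lemma wnorm_pos {m : ℕ} {F : Matrix (Fin m) (Fin m) ℂ} (hF : F.PosDef) {x : Fin m → ℂ}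
    (hx : x ≠ 0) : 0 < wnorm F x := by
  rw [wnorm_eq_norm hF]
  exact (@norm_pos_iff _ (Matrix.toNormedAddCommGroup F hF).toNormedAddGroup x).mpr hx

lemma wnorm_add_le {m : ℕ} {F : Matrix (Fin m) (Fin m) ℂ} (hF : F.PosDef) (x y : Fin m → ℂ) :
    wnorm F (x + y) ≤ wnorm F x + wnorm F y := by
  simp only [wnorm_eq_norm hF]
  exact @norm_add_le _
    (@NormedAddGroup.toSeminormedAddGroup _ (Matrix.toNormedAddCommGroup F hF).toNormedAddGroup) x y

lemma sum_mulVec' {ι : Type*} (s : Finset ι) {p q : ℕ}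
    (M : ι → Matrix (Fin p) (Fin q) ℂ) (x : Fin q → ℂ) :
    (∑ j ∈ s, M j) *ᵥ x = ∑ j ∈ s, (M j) *ᵥ x := by
  funext i
  simp only [Matrix.mulVec, dotProduct, Finset.sum_apply, Matrix.sum_apply, Finset.sum_mul]
  exact Finset.sum_comm

/-- upper bound on the weighted norm of the SORAS-preconditioned matrix
`M⁻¹ A`, where `M⁻¹ = Σ_j R_jᵀ D_j B_j⁻¹ D_j R_j`. -/
theorem stmt0 (n N : ℕ) (hn : 1 ≤ n) (hN : 0 < N)
    (nj : Fin N → ℕ) (hnj : ∀ j, 1 ≤ nj j)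
    (A : Matrix (Fin n) (Fin n) ℂ)
    (R : ∀ j : Fin N, Matrix (Fin (nj j)) (Fin n) ℂ)
    (D : ∀ j : Fin N, Matrix (Fin (nj j)) (Fin (nj j)) ℂ)
    (B : ∀ j : Fin N, Matrix (Fin (nj j)) (Fin (nj j)) ℂ)
    (FΩ : Matrix (Fin n) (Fin n) ℂ)
    (FF : ∀ j : Fin N, Matrix (Fin (nj j)) (Fin (nj j)) ℂ)
    (hD : ∀ j, ∃ dd : Fin (nj j) → ℝ,
      (∀ i, 0 ≤ dd i) ∧ D j = Matrix.diagonal fun i => (dd i : ℂ))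
    (hB : ∀ j, IsUnit (B j))
    (hFΩ : FΩ.PosDef) (hFF : ∀ j, (FF j).PosDef)
    (Λ0 Λ1 : ℝ) (hΛ0 : 0 < Λ0) (hΛ1 : 0 < Λ1)
    (CD CDB Cstab : Fin N → ℝ)
    (hCD : ∀ j, 0 < CD j) (hCDB : ∀ j, 0 < CDB j) (hCstab : ∀ j, 0 < Cstab j)
    -- (a)
    (ha : ∀ (j : Fin N) (V : Fin n → ℂ) (W : Fin (nj j) → ℂ),
      iprod ((D j).mulVec ((R j).mulVec (A.mulVec V))) W
        = iprod ((D j).mulVec ((B j).mulVec ((R j).mulVec V))) W)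
    -- (b)
    (hb : ∀ W : (j : Fin N) → Fin (nj j) → ℂ,
      wnorm FΩ (∑ j, (R j)ᵀ.mulVec (W j)) ^ 2 ≤ Λ0 * ∑ j, wnorm (FF j) (W j) ^ 2)
    -- (c)
    (hc : ∀ V : Fin n → ℂ,
      ∑ j, wnorm (FF j) ((R j).mulVec V) ^ 2 ≤ Λ1 * wnorm FΩ V ^ 2)
    -- (d)
    (hd : ∀ (j : Fin N) (W : Fin (nj j) → ℂ),
      wnorm (FF j) ((D j).mulVec W) ≤ CD j * wnorm (FF j) W)
    -- (e)
    (he : ∀ (j : Fin N) (V W : Fin (nj j) → ℂ),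
      ‖iprod ((D j * B j - B j * D j).mulVec V) W‖
        ≤ CDB j * wnorm (FF j) V * wnorm (FF j) W)
    -- (f)
    (hf : ∀ (j : Fin N) (U : Fin (nj j) → ℂ),
      wnorm (FF j) U ≤ Cstab j * ⨆ W : {W : Fin (nj j) → ℂ // W ≠ 0},
        ‖iprod ((B j).mulVec U) W.1‖ / wnorm (FF j) W.1) :
    ∀ V : Fin n → ℂ, V ≠ 0 →
      wnorm FΩ ((∑ j, (R j)ᵀ * D j * (B j)⁻¹ * D j * R j).mulVec (A.mulVec V)) / wnorm FΩ V
        ≤ Real.sqrt (Λ0 * Λ1) *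
            Finset.univ.sup' ⟨⟨0, hN⟩, Finset.mem_univ _⟩
              (fun j => CD j * (Cstab j * CDB j + CD j)) := by
  intro V hV
  classical
  set K : ℝ := Finset.univ.sup' ⟨⟨0, hN⟩, Finset.mem_univ _⟩
      (fun j => CD j * (Cstab j * CDB j + CD j)) with hKdef
  have hKj : ∀ j, CD j * (Cstab j * CDB j + CD j) ≤ K := by
    intro j; rw [hKdef]
    exact Finset.le_sup' (fun j => CD j * (Cstab j * CDB j + CD j)) (Finset.mem_univ j)
  have hK0 : 0 < K := by
    refine lt_of_lt_of_le ?_ (hKj ⟨0, hN⟩)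
    have h1 := hCD ⟨0, hN⟩; have h2 := hCDB ⟨0, hN⟩; have h3 := hCstab ⟨0, hN⟩
    positivity
  have hBd : ∀ j, IsUnit (B j).det := fun j => (Matrix.isUnit_iff_isUnit_det _).mp (hB j)
  -- vector form of (a)
  have hav : ∀ j, (D j) *ᵥ ((R j) *ᵥ (A *ᵥ V)) = (D j) *ᵥ ((B j) *ᵥ ((R j) *ᵥ V)) := by
    intro j
    funext i
    have h := ha j V (Pi.single i 1)
    simpa [iprod, dotProduct, Pi.single_apply, apply_ite (star : ℂ → ℂ), ite_mul,
      Finset.sum_ite_eq, Finset.sum_ite_eq'] using h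
  set U : ∀ j, Fin (nj j) → ℂ :=
    fun j => (B j)⁻¹ *ᵥ ((D j) *ᵥ ((R j) *ᵥ (A *ᵥ V))) with hUdef
  set RV : ∀ j, Fin (nj j) → ℂ := fun j => (R j) *ᵥ V with hRVdef
  set Z : ∀ j, Fin (nj j) → ℂ :=
    fun j => (B j)⁻¹ *ᵥ ((D j * B j - B j * D j) *ᵥ RV j) with hZdef
  have hBZ : ∀ j, (B j) *ᵥ Z j = (D j * B j - B j * D j) *ᵥ RV j := by
    intro j
    show (B j) *ᵥ ((B j)⁻¹ *ᵥ ((D j * B j - B j * D j) *ᵥ RV j)) = _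
    rw [Matrix.mulVec_mulVec, Matrix.mul_nonsing_inv _ (hBd j), Matrix.one_mulVec]
  have hcomp : ∀ j, (D j) *ᵥ ((B j) *ᵥ RV j) = (B j) *ᵥ ((D j) *ᵥ RV j + Z j) := by
    intro j
    rw [Matrix.mulVec_add, hBZ j, Matrix.mulVec_mulVec (RV j) (D j) (B j),
      Matrix.mulVec_mulVec (RV j) (B j) (D j), ← Matrix.add_mulVec]
    have hid : B j * D j + (D j * B j - B j * D j) = D j * B j := by abel
    rw [hid]
  have hUdec : ∀ j, U j = (D j) *ᵥ RV j + Z j := by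
    intro j
    have e1 : U j = (B j)⁻¹ *ᵥ ((D j) *ᵥ ((B j) *ᵥ RV j)) :=
      congrArg (fun x => (B j)⁻¹ *ᵥ x) (hav j)
    rw [e1, hcomp j, Matrix.mulVec_mulVec, Matrix.nonsing_inv_mul _ (hBd j),
      Matrix.one_mulVec]
  -- bound on Z
  have hZle : ∀ j, wnorm (FF j) (Z j) ≤ Cstab j * (CDB j * wnorm (FF j) (RV j)) := by
    intro j
    haveI : Nonempty {W : Fin (nj j) → ℂ // W ≠ 0} :=
      ⟨⟨fun _ => 1, fun h => one_ne_zero (congrFun h ⟨0, hnj j⟩)⟩⟩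
    refine (hf j (Z j)).trans (mul_le_mul_of_nonneg_left ?_ (hCstab j).le)
    refine Real.iSup_le (fun W => ?_)
      (mul_nonneg (hCDB j).le (wnorm_nonneg _ _))
    rw [hBZ j, div_le_iff₀ (wnorm_pos (hFF j) W.2)]
    exact he j (RV j) W.1
  -- per-subdomain bound
  have key : ∀ j, wnorm (FF j) ((D j) *ᵥ U j)
      ≤ (CD j * (Cstab j * CDB j + CD j)) * wnorm (FF j) (RV j) := by
    intro j
    calc wnorm (FF j) ((D j) *ᵥ U j) ≤ CD j * wnorm (FF j) (U j) := hd j (U j)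
      _ ≤ CD j * (wnorm (FF j) ((D j) *ᵥ RV j) + wnorm (FF j) (Z j)) := by
          refine mul_le_mul_of_nonneg_left ?_ (hCD j).le
          rw [hUdec j]; exact wnorm_add_le (hFF j) _ _
      _ ≤ CD j * (CD j * wnorm (FF j) (RV j) + Cstab j * (CDB j * wnorm (FF j) (RV j))) :=
          mul_le_mul_of_nonneg_left (add_le_add (hd j _) (hZle j)) (hCD j).le
      _ = (CD j * (Cstab j * CDB j + CD j)) * wnorm (FF j) (RV j) := by ring
  -- rewrite the preconditioned vector
  have hLHS : (∑ j, (R j)ᵀ * D j * (B j)⁻¹ * D j * R j) *ᵥ (A *ᵥ V)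
      = ∑ j, (R j)ᵀ *ᵥ ((D j) *ᵥ U j) := by
    rw [sum_mulVec']
    refine Finset.sum_congr rfl fun j _ => ?_
    show _ = (R j)ᵀ *ᵥ ((D j) *ᵥ ((B j)⁻¹ *ᵥ ((D j) *ᵥ ((R j) *ᵥ (A *ᵥ V)))))
    simp only [Matrix.mulVec_mulVec, Matrix.mul_assoc]
  have h1 := hb (fun j => (D j) *ᵥ U j)
  have h2 : ∑ j, wnorm (FF j) ((D j) *ᵥ U j) ^ 2 ≤ K ^ 2 * (Λ1 * wnorm FΩ V ^ 2) := by
    calc ∑ j, wnorm (FF j) ((D j) *ᵥ U j) ^ 2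
        ≤ ∑ j, (K * wnorm (FF j) (RV j)) ^ 2 := by
          refine Finset.sum_le_sum fun j _ => ?_
          refine pow_le_pow_left₀ (wnorm_nonneg _ _) ((key j).trans ?_) 2
          exact mul_le_mul_of_nonneg_right (hKj j) (wnorm_nonneg _ _)
      _ = K ^ 2 * ∑ j, wnorm (FF j) (RV j) ^ 2 := by
          rw [Finset.mul_sum]; exact Finset.sum_congr rfl fun j _ => by ring
      _ ≤ K ^ 2 * (Λ1 * wnorm FΩ V ^ 2) :=
          mul_le_mul_of_nonneg_left (hc V) (by positivity)
  have hVpos := wnorm_pos hFΩ hV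
  rw [div_le_iff₀ hVpos, hLHS]
  have hsq : wnorm FΩ (∑ j, (R j)ᵀ *ᵥ ((D j) *ᵥ U j)) ^ 2
      ≤ (Real.sqrt (Λ0 * Λ1) * K * wnorm FΩ V) ^ 2 := by
    have : (Real.sqrt (Λ0 * Λ1) * K * wnorm FΩ V) ^ 2
        = Λ0 * (K ^ 2 * (Λ1 * wnorm FΩ V ^ 2)) := by
      rw [mul_pow, mul_pow, Real.sq_sqrt (by positivity)]
      ring
    rw [this]
    exact h1.trans (mul_le_mul_of_nonneg_left h2 hΛ0.le)
  have := (pow_le_pow_iff_left₀ (wnorm_nonneg _ _)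
    (by positivity) (two_ne_zero)).mp hsq
  exact this
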